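/- Suppose the exponential maps α, β satisfy Condition F. Let m ∈ indec C and r ∈ indec R with dim_ℂ Ext¹_C(r,m) = dim_ℂ Ext¹_C(m,r) = 1, with nonsplit triangles m →μ a →γ r →δ Σm and r →σ b →η m →ζ Σr (δ, ζ nonzero), and suppose Gm, Ga, Gb have finite length in Mod R. Then α(a) = α(r)α(m)·β([Ker Gμ]) and α(b) = α(r)α(m) (the latter because Ker Gσ = 0, since Gr = 0). -/

import Mathlib

open CategoryTheory CategoryTheory.Limits CategoryTheory.Pretriangulated

noncomputable section

universe v u

variable (C : Type u) [Category.{v} C]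

/-- An object of an additive category is *indecomposable* if it is nonzero and
admits no nontrivial direct sum decomposition. -/
def Indec [Limits.HasZeroMorphisms C] [HasBinaryBiproducts C] (c : C) : Prop :=
  ¬ IsZero c ∧ ∀ x y : C, (c ≅ x ⊞ y) → IsZero x ∨ IsZero y

/-- An object of an abelian category has *finite length* iff its lattice of
subobjects satisfies both chain conditions. -/
def FinLength {M : Type*} [Category M] (X : M) : Prop :=
  WellFoundedGT (Subobject X) ∧ WellFoundedLT (Subobject X)

variable [Preadditive C] [Linear ℂ C] (R : Set C)

/-- `Mod R`: the abelian category of ℂ-linear contravariant functors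
`R → Vect ℂ`, realised as the functor category `Rᵒᵖ ⥤ ModuleCat ℂ`
on the full subcategory `R ⊆ C`. -/
abbrev ModCat : Type _ := (ObjectProperty.FullSubcategory fun x : C => x ∈ R)ᵒᵖ ⥤ ModuleCat.{v} ℂ

variable [HasZeroObject C] [HasShift C ℤ] [∀ n : ℤ, (shiftFunctor C n).Additive]
  [Pretriangulated C]

/-- The functor `G : C ⥤ Mod R`, `Gc = Hom_C(-, Σc)|_R`. -/
def Gfun : C ⥤ ModCat C R :=
  shiftFunctor C (1 : ℤ) ⋙ linearYoneda ℂ C ⋙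
    (Functor.whiskeringLeft _ _ _).obj (ObjectProperty.ι fun x : C => x ∈ R).op

variable [HasBinaryBiproducts C]

/-- **Condition F**: for each (distinguished) triangle `x →φ y →ω z →ψ Σx` in
`C` such that `Gx`, `Gy`, `Gz` have finite length in `Mod R`, the following
property holds: `α(y) = α(x ⊕ z) · β([Ker Gφ])`. -/
def ConditionF {K A : Type*} [CommRing A] (k : ModCat C R → K)
    (α : C → A) (β : K → A) : Prop :=
  ∀ T ∈ distTriang C,
    FinLength ((Gfun C R).obj T.obj₁) → FinLength ((Gfun C R).obj T.obj₂) →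
    FinLength ((Gfun C R).obj T.obj₃) →
    α T.obj₂ = α (T.obj₁ ⊞ T.obj₃) * β (k (kernel ((Gfun C R).map T.mor₁)))

/-- A zero object has finite length. -/
lemma finLength_of_isZero {M : Type*} [Category M] [Limits.HasZeroMorphisms M]
    {X : M} (h : IsZero X) : FinLength X := by
  have hsub : Subsingleton (Subobject X) := by
    have hle : ∀ P Q : Subobject X, P ≤ Q := by
      intro P Q
      refine Subobject.le_of_comm 0 ?_
      have hP : IsZero (Subobject.underlying.obj P) := IsZero.of_mono P.arrow h
      rw [zero_comp, hP.eq_zero_of_src P.arrow]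
    exact ⟨fun P Q => le_antisymm (hle P Q) (hle Q P)⟩
  constructor
  · exact ⟨⟨fun a => Acc.intro a fun b hb => absurd (Subsingleton.elim a b) hb.ne⟩⟩
  · exact ⟨⟨fun a => Acc.intro a fun b hb => absurd (Subsingleton.elim b a) hb.ne⟩⟩


/-- Suppose the exponential maps `α`, `β` satisfy
Condition F.  Let `m ∈ indec C` and `r ∈ indec R` with
`dim_ℂ Ext¹(r,m) = dim_ℂ Ext¹(m,r) = 1`, with nonsplit triangles
`m →μ a →γ r →δ Σm` and `r →σ b →η m →ζ Σr` (`δ`, `ζ` nonzero), and suppose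
`Gm`, `Ga`, `Gb` have finite length in `Mod R`.  Then
`α(a) = α(r)α(m)·β([Ker Gμ])` and `α(b) = α(r)α(m)` (the latter because
`Ker Gσ = 0`, since `Gr = 0`). -/

theorem statement12
    -- `R` is rigid: `Hom_C(R, ΣR) = 0` (context):
    (hrigid : ∀ r ∈ R, ∀ r' ∈ R, ∀ f : r ⟶ (shiftFunctor C (1 : ℤ)).obj r', f = 0)
    {K : Type*} [AddCommGroup K] (k : ModCat C R → K)
    -- the `K₀`-class of the zero object vanishes:
    (hk0 : ∀ X : ModCat C R, IsZero X → k X = 0)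
    {A : Type*} [CommRing A] (α : C → A) (β : K → A)
    -- `α` and `β` are exponential:
    (hα0 : ∀ x : C, IsZero x → α x = 1)
    (hαadd : ∀ x y : C, α (x ⊞ y) = α x * α y)
    (hβ0 : β 0 = 1)
    (hβadd : ∀ e f : K, β (e + f) = β e * β f)
    -- `α` and `β` satisfy Condition F:
    (hF : ConditionF C R k α β)
    -- `m ∈ indec C` and `r ∈ indec R`:
    (m r : C) (hm : Indec C m) (hrR : r ∈ R) (hr : Indec C r)
    -- `Ext¹_C(r,m)` and `Ext¹_C(m,r)` are one-dimensional over ℂ: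
    (hext1 : Module.finrank ℂ (r ⟶ (shiftFunctor C (1 : ℤ)).obj m) = 1)
    (hext2 : Module.finrank ℂ (m ⟶ (shiftFunctor C (1 : ℤ)).obj r) = 1)
    -- the two nonsplit triangles, with `δ` and `ζ` nonzero:
    (a b : C) (μ : m ⟶ a) (γ : a ⟶ r) (δ : r ⟶ (shiftFunctor C (1 : ℤ)).obj m)
    (σ : r ⟶ b) (η : b ⟶ m) (ζ : m ⟶ (shiftFunctor C (1 : ℤ)).obj r)
    (hT1 : Triangle.mk μ γ δ ∈ distTriang C) (hδ : δ ≠ 0)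
    (hT2 : Triangle.mk σ η ζ ∈ distTriang C) (hζ : ζ ≠ 0)
    -- `Gm`, `Ga`, `Gb` have finite length in `Mod R`:
    (hGm : FinLength ((Gfun C R).obj m))
    (hGa : FinLength ((Gfun C R).obj a))
    (hGb : FinLength ((Gfun C R).obj b)) :
    α a = α r * α m * β (k (kernel ((Gfun C R).map μ))) ∧
      α b = α r * α m := by
  -- `Gr = 0` since `R` is rigid.
  have hGr : IsZero ((Gfun C R).obj r) := by
    apply Functor.isZero
    intro X
    refine @ModuleCat.isZero_of_subsingleton _ _ _ ?_
    constructor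
    intro f g
    have hf := hrigid X.unop.obj X.unop.property r hrR f
    have hg := hrigid X.unop.obj X.unop.property r hrR g
    exact hf.trans hg.symm
  have hGrF : FinLength ((Gfun C R).obj r) := finLength_of_isZero hGr
  have h1 := hF _ hT1 hGm hGa hGrF
  have h2 := hF _ hT2 hGrF hGb hGm
  dsimp only [Triangle.mk] at h1 h2
  constructor
  · rw [h1, hαadd, mul_comm (α m) (α r)]
  · have hker : IsZero (kernel ((Gfun C R).map σ)) :=
      IsZero.of_mono (kernel.ι ((Gfun C R).map σ)) hGr
    rw [h2, hαadd, hk0 _ hker, hβ0, mul_one]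

end
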